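/- Let T be a pretriangulated category with shift Σ (and with finite biproducts), and let A ⊕ B → A ⊕ C → D → Σ(A ⊕ B) be a distinguished triangle whose first morphism is given in matrix form by components a : A → A, b : B → A, c : A → C, d : B → C, where a is an isomorphism. Then this triangle is isomorphic to the direct sum of the contractible triangle A →1 A → 0 → ΣA and a distinguished triangle B →t C → D → ΣB, where t = d − c ∘ a⁻¹ ∘ b; in particular B →t C → D → ΣB is a distinguished triangle. -/

import Mathlib

open CategoryTheory CategoryTheory.Limits CategoryTheory.Pretriangulated ZeroObject

section
variable {C : Type*} [Category C] [Preadditive C] [HasZeroObject C] [HasShift C ℤ]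
  [∀ n : ℤ, (shiftFunctor C n).Additive] [Pretriangulated C]

noncomputable def biprodIsoPiBool (G : Bool → C) :
    (G false) ⊞ (G true) ≅ ∏ᶜ G where
  hom := Pi.lift (fun b => match b with | false => biprod.fst | true => biprod.snd)
  inv := biprod.lift (Pi.π G false) (Pi.π G true)
  hom_inv_id := by ext <;> simp
  inv_hom_id := by apply limit.hom_ext; rintro ⟨(_|_)⟩ <;> simp

lemma binary_directSum_distTriang (T₁ T₂ : Triangle C)
    (h₁ : T₁ ∈ distTriang C) (h₂ : T₂ ∈ distTriang C) :
    Triangle.mk (biprod.map T₁.mor₁ T₂.mor₁) (biprod.map T₁.mor₂ T₂.mor₂)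
      (biprod.desc (T₁.mor₃ ≫ (biprod.inl : T₁.obj₁ ⟶ T₁.obj₁ ⊞ T₂.obj₁)⟦(1:ℤ)⟧')
        (T₂.mor₃ ≫ (biprod.inr : T₂.obj₁ ⟶ T₁.obj₁ ⊞ T₂.obj₁)⟦(1:ℤ)⟧')) ∈ distTriang C := by
  let F : Bool → Triangle C := fun b => match b with | false => T₁ | true => T₂
  have hPT := productTriangle_distinguished F (by rintro (_|_) <;> assumption)
  refine isomorphic_distinguished _ hPT _ ?_
  refine Triangle.isoMk _ _ (biprodIsoPiBool (fun b => (F b).obj₁))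
    (biprodIsoPiBool (fun b => (F b).obj₂)) (biprodIsoPiBool (fun b => (F b).obj₃)) ?_ ?_ ?_
  · exact (show biprod.map (F false).mor₁ (F true).mor₁ ≫ (biprodIsoPiBool (fun b => (F b).obj₂)).hom =
      (biprodIsoPiBool (fun b => (F b).obj₁)).hom ≫ Limits.Pi.map (fun j => (F j).mor₁) by
      apply limit.hom_ext; rintro ⟨(_|_)⟩ <;> simp [biprodIsoPiBool, F])
  · exact (show biprod.map (F false).mor₂ (F true).mor₂ ≫ (biprodIsoPiBool (fun b => (F b).obj₃)).hom =
      (biprodIsoPiBool (fun b => (F b).obj₂)).hom ≫ Limits.Pi.map (fun j => (F j).mor₂) by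
      apply limit.hom_ext; rintro ⟨(_|_)⟩ <;> simp [biprodIsoPiBool, F])
  · refine (show biprod.desc ((F false).mor₃ ≫ (shiftFunctor C (1:ℤ)).map biprod.inl)
        ((F true).mor₃ ≫ (shiftFunctor C (1:ℤ)).map biprod.inr) ≫
        (shiftFunctor C (1:ℤ)).map (biprodIsoPiBool (fun b => (F b).obj₁)).hom =
      (biprodIsoPiBool (fun b => (F b).obj₃)).hom ≫ (Limits.Pi.map (fun j => (F j).mor₃) ≫
        inv (piComparison (shiftFunctor C (1:ℤ)) (fun j => (F j).obj₁))) from ?_)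
    rw [← cancel_mono (piComparison (shiftFunctor C (1:ℤ)) (fun b => (F b).obj₁))]
    simp only [Category.assoc, IsIso.inv_hom_id, Category.comp_id]
    apply biprod.hom_ext' <;> apply limit.hom_ext <;> rintro ⟨(_|_)⟩ <;>
      simp [biprodIsoPiBool, F, piComparison_comp_π, ← Functor.map_comp]

noncomputable def zeroBiprodSndIso (X : C) : (0 : C) ⊞ X ≅ X where
  hom := biprod.snd
  inv := biprod.inr
  hom_inv_id := by
    apply biprod.hom_ext
    · exact (isZero_zero C).eq_of_tgt _ _
    · simp
  inv_hom_id := by simp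

end

theorem distTriang_splitting_of_iso_component {T : Type*} [Category T] [Preadditive T]
    [HasZeroObject T] [HasShift T ℤ] [∀ n : ℤ, (shiftFunctor T n).Additive]
    [Pretriangulated T] [HasBinaryBiproducts T]
    {A B C D : T} (a : A ⟶ A) (b : B ⟶ A) (c : A ⟶ C) (d : B ⟶ C)
    [IsIso a]
    (s : A ⊞ C ⟶ D) (u : D ⟶ (A ⊞ B)⟦(1 : ℤ)⟧)
    (hdist : Triangle.mk (biprod.desc (biprod.lift a c) (biprod.lift b d)) s u
      ∈ distTriang T) :
    ∃ (s₂ : C ⟶ D) (u₂ : D ⟶ B⟦(1 : ℤ)⟧),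
      (Triangle.mk (d - b ≫ inv a ≫ c) s₂ u₂ ∈ distTriang T) ∧
      Nonempty
        ((Triangle.mk (biprod.desc (biprod.lift a c) (biprod.lift b d)) s u) ≅
          Triangle.mk (biprod.map (𝟙 A) (d - b ≫ inv a ≫ c))
            (biprod.map (0 : A ⟶ (0 : T)) s₂)
            (biprod.desc 0 (u₂ ≫ (biprod.inr : B ⟶ A ⊞ B)⟦(1 : ℤ)⟧'))) := by
  set t := d - b ≫ inv a ≫ c with ht
  obtain ⟨E, s₃, u₃, hE⟩ := distinguished_cocone_triangle t
  let e₁ : A ⊞ B ≅ A ⊞ B :=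
    { hom := biprod.desc (biprod.lift (inv a) 0) (biprod.lift (-(b ≫ inv a)) (𝟙 B))
      inv := biprod.desc (biprod.lift a 0) (biprod.lift b (𝟙 B))
      hom_inv_id := by apply biprod.hom_ext' <;> apply biprod.hom_ext <;> simp
      inv_hom_id := by apply biprod.hom_ext' <;> apply biprod.hom_ext <;> simp }
  let e₂ : A ⊞ C ≅ A ⊞ C :=
    { hom := biprod.desc (biprod.lift (𝟙 A) (-(inv a ≫ c))) (biprod.lift 0 (𝟙 C))
      inv := biprod.desc (biprod.lift (𝟙 A) (inv a ≫ c)) (biprod.lift 0 (𝟙 C))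
      hom_inv_id := by apply biprod.hom_ext' <;> apply biprod.hom_ext <;> simp
      inv_hom_id := by apply biprod.hom_ext' <;> apply biprod.hom_ext <;> simp }
  have key : e₁.hom ≫ (biprod.desc (biprod.lift a c) (biprod.lift b d)) ≫ e₂.hom
      = biprod.map (𝟙 A) t := by
    apply biprod.hom_ext' <;> apply biprod.hom_ext <;>
      simp [e₁, e₂, ht, Preadditive.sub_comp, Preadditive.comp_sub, Preadditive.neg_comp] <;>
      abel
  let T₂ : Triangle T := Triangle.mk (biprod.map (𝟙 A) t) (e₂.inv ≫ s)
    (u ≫ (e₁.inv)⟦(1:ℤ)⟧')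
  have iso₀ : Triangle.mk (biprod.desc (biprod.lift a c) (biprod.lift b d)) s u ≅ T₂ :=
    Triangle.isoMk _ _ e₁.symm e₂ (Iso.refl D)
      (by show (biprod.desc (biprod.lift a c) (biprod.lift b d)) ≫ e₂.hom = e₁.symm.hom ≫ (biprod.map (𝟙 A) t)
          rw [Iso.symm_hom, ← key, Iso.inv_hom_id_assoc])
      (by show s ≫ 𝟙 D = e₂.hom ≫ (e₂.inv ≫ s)
          rw [Iso.hom_inv_id_assoc, Category.comp_id])
      (by show u ≫ (shiftFunctor T (1:ℤ)).map e₁.symm.hom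
            = 𝟙 D ≫ (u ≫ (shiftFunctor T (1:ℤ)).map e₁.inv)
          rw [Category.id_comp, Iso.symm_hom])
  have hT₂ : T₂ ∈ distTriang T := isomorphic_distinguished _ hdist _ iso₀.symm
  have hS := binary_directSum_distTriang (contractibleTriangle A) (Triangle.mk t s₃ u₃)
    (contractible_distinguished A) hE
  let S'' : Triangle T := Triangle.mk (biprod.map (𝟙 A) t) (biprod.map (0 : A ⟶ 0) s₃)
    (biprod.desc 0 (u₃ ≫ (biprod.inr : B ⟶ A ⊞ B)⟦(1:ℤ)⟧'))
  have hS'' : S'' ∈ distTriang T := isomorphic_distinguished _ hS _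
    (Triangle.isoMk _ _ (Iso.refl _) (Iso.refl _) (Iso.refl _)
      (by dsimp [S'']; exact (Category.comp_id _).trans (Category.id_comp _).symm)
      (by dsimp [S'']; exact (Category.comp_id _).trans (Category.id_comp _).symm)
      (by show biprod.desc 0 (u₃ ≫ (biprod.inr : B ⟶ A ⊞ B)⟦(1:ℤ)⟧') ≫ (shiftFunctor T (1:ℤ)).map (𝟙 (A ⊞ B))
            = 𝟙 ((0:T) ⊞ E) ≫ biprod.desc ((0 : (0:T) ⟶ A⟦(1:ℤ)⟧) ≫ (biprod.inl : A ⟶ A ⊞ B)⟦(1:ℤ)⟧')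
              (u₃ ≫ (biprod.inr : B ⟶ A ⊞ B)⟦(1:ℤ)⟧')
          simp))
  let φ := completeDistinguishedTriangleMorphism T₂ S'' hT₂ hS'' (𝟙 _) (𝟙 _)
    (by dsimp [T₂, S'']; exact (Category.comp_id _).trans (Category.id_comp _).symm)
  have hφ₁ : φ.hom₁ = 𝟙 _ := rfl
  have hφ₂ : φ.hom₂ = 𝟙 _ := rfl
  have : IsIso φ.hom₃ := isIso₃_of_isIso₁₂ φ hT₂ hS''
    (by rw [hφ₁]; exact IsIso.id _) (by rw [hφ₂]; exact IsIso.id _)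
  let h : D ≅ (0:T) ⊞ E := @asIso _ _ _ _ φ.hom₃ this
  let ψ : E ≅ D := (zeroBiprodSndIso E).symm ≪≫ h.symm
  refine ⟨s₃ ≫ ψ.hom, ψ.inv ≫ u₃, ?_, ?_⟩
  · exact isomorphic_distinguished _ hE _
      (Triangle.isoMk _ _ (Iso.refl _) (Iso.refl _) ψ.symm
        (by exact (Category.comp_id _).trans (Category.id_comp _).symm)
        (by show (s₃ ≫ ψ.hom) ≫ ψ.inv = 𝟙 C ≫ s₃; simp)
        (by show (ψ.inv ≫ u₃) ≫ (shiftFunctor T (1:ℤ)).map (𝟙 B) = ψ.symm.hom ≫ u₃; simp))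
  · refine ⟨iso₀ ≪≫ Triangle.isoMk _ _ (Iso.refl _) (Iso.refl _)
      (h ≪≫ biprod.mapIso (Iso.refl _) ψ) ?_ ?_ ?_⟩
    · exact (Category.comp_id _).trans (Category.id_comp _).symm
    · have := φ.comm₂
      rw [hφ₂] at this
      have hh : h.hom = φ.hom₃ := rfl
      dsimp [T₂, S''] at this ⊢
      change (e₂.inv ≫ s) ≫ h.hom = 𝟙 (A ⊞ C) ≫ biprod.map (0 : A ⟶ 0) s₃ at this
      change (e₂.inv ≫ s) ≫ (h.hom ≫ (biprod.mapIso (Iso.refl (0:T)) ψ).hom)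
        = 𝟙 (A ⊞ C) ≫ biprod.map (0 : A ⟶ 0) (s₃ ≫ ψ.hom)
      rw [← Category.assoc, this]
      apply biprod.hom_ext' <;> simp
    · have := φ.comm₃
      rw [hφ₁] at this
      have hh : φ.hom₃ = h.hom := rfl
      dsimp [T₂, S''] at this ⊢
      change (u ≫ (shiftFunctor T (1:ℤ)).map e₁.inv) ≫ (shiftFunctor T (1:ℤ)).map (𝟙 (A ⊞ B))
        = h.hom ≫ biprod.desc 0 (u₃ ≫ (biprod.inr : B ⟶ A ⊞ B)⟦(1:ℤ)⟧') at this
      change (u ≫ (shiftFunctor T (1:ℤ)).map e₁.inv) ≫ (shiftFunctor T (1:ℤ)).map (𝟙 (A ⊞ B))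
        = (h.hom ≫ (biprod.mapIso (Iso.refl (0:T)) ψ).hom) ≫
          biprod.desc 0 ((ψ.inv ≫ u₃) ≫ (biprod.inr : B ⟶ A ⊞ B)⟦(1:ℤ)⟧')
      rw [this, Category.assoc]
      congr 1
      apply biprod.hom_ext' <;> simp [ψ]
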